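/- Let H be a hypergraph with a tree decomposition (T, {B_t}) of λ-width at most k for a well-behaved measure λ, and let W ⊆ V(H). Then there exists a set S ⊆ V(H) with λ_H(S) ≤ k such that for every connected component C of the Gaifman graph of H with S removed, λ_H(W ∩ C) ≤ λ_H(W)/2. -/

import Mathlib

open Set

universe u

variable {V : Type u}

/-- A set of vertices is independent if no two of its members are adjacent. -/
def IndepSet (G : SimpleGraph V) (I : Set V) : Prop :=
  I.Pairwise (fun u v => ¬ G.Adj u v)

/-- A maximal independent set of a graph. -/
def MaxIndep (G : SimpleGraph V) (I : Set V) : Prop :=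
  IndepSet G I ∧ ∀ J : Set V, IndepSet G J → I ⊆ J → J = I

/-- An induced matching with `k` edges `a i b i`: the `2k` endpoints are pairwise
distinct and the only edges of `G` between them are the matching edges themselves. -/
def IsInducedMatching (G : SimpleGraph V) (k : ℕ) (a b : Fin k → V) : Prop :=
  (∀ i, G.Adj (a i) (b i)) ∧
  ∀ i j, i ≠ j → ∀ x ∈ ({a i, b i} : Set V), ∀ y ∈ ({a j, b j} : Set V),
    x ≠ y ∧ ¬ G.Adj x y

/-- `μ_G(S)`: maximum size of an induced matching each of whose edges meets `S`. -/
noncomputable def muS (G : SimpleGraph V) (S : Set V) : ℕ :=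
  sSup {k | ∃ a b : Fin k → V, IsInducedMatching G k a b ∧ ∀ i, a i ∈ S ∨ b i ∈ S}

/-- `α_G(S)`: maximum size of an independent set contained in `S`. -/
noncomputable def alphaS (G : SimpleGraph V) (S : Set V) : ℕ :=
  sSup {n | ∃ I : Set V, I ⊆ S ∧ IndepSet G I ∧ I.ncard = n}

/-- The trace (restriction) of a set family on `S`. -/
def trace (S : Set V) (F : Set (Set V)) : Set (Set V) :=
  (fun I => I ∩ S) '' F

/-- A hypergraph (given by its edge set) is a clutter if no edge properly contains another. -/
def IsClutter (E : Set (Set V)) : Prop := ∀ h ∈ E, ∀ f ∈ E, f ⊆ h → f = h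

/-- A transversal of a hypergraph: a set meeting every edge. -/
def IsTransversal (E : Set (Set V)) (T : Set V) : Prop := ∀ h ∈ E, (T ∩ h).Nonempty

/-- The blocker: the clutter of all inclusion-wise minimal transversals. -/
def blocker (E : Set (Set V)) : Set (Set V) :=
  {T | IsTransversal E T ∧ ∀ T' ⊆ T, IsTransversal E T' → T' = T}

/-- Inclusion-wise minimal members of a family of sets. -/
def minEdges (F : Set (Set V)) : Set (Set V) := {h ∈ F | ∀ f ∈ F, f ⊆ h → f = h}

/-- Deletion of a vertex from a clutter. -/
def del (E : Set (Set V)) (v : V) : Set (Set V) := {h ∈ E | v ∉ h}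

/-- Contraction of a vertex in a clutter. -/
def contr (E : Set (Set V)) (v : V) : Set (Set V) :=
  minEdges ((fun h => h \ {v}) '' E)

/-- Contraction of a set of vertices in a clutter. -/
def contrSet (E : Set (Set V)) (B : Set V) : Set (Set V) :=
  minEdges ((fun h => h \ B) '' E)

/-- Join of two clutters: minimal elements of the union of the edge sets. -/
def cJoin (E F : Set (Set V)) : Set (Set V) := minEdges (E ∪ F)

/-- Meet of two clutters: minimal elements of pairwise unions of edges. -/
def cMeet (E F : Set (Set V)) : Set (Set V) :=
  minEdges {s | ∃ h ∈ E, ∃ f ∈ F, s = h ∪ f}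

/-- `H ∘ (h, u, v) = H[u; h∖{u}] ∨ H[v; h∖{v}]`. -/
def cOp (E : Set (Set V)) (h : Set V) (u v : V) : Set (Set V) :=
  cJoin (contrSet (del E u) (h \ {u})) (contrSet (del E v) (h \ {v}))

/-- An independent (stable) set of a hypergraph: contains no edge. -/
def HIndep (E : Set (Set V)) (I : Set V) : Prop := ∀ h ∈ E, ¬ h ⊆ I

/-- A maximal independent set of a hypergraph. -/
def MaxHIndep (E : Set (Set V)) (I : Set V) : Prop :=
  HIndep E I ∧ ∀ J : Set V, HIndep E J → I ⊆ J → J = I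

/-- The Gaifman graph of a hypergraph. -/
def gaif (E : Set (Set V)) : SimpleGraph V :=
  SimpleGraph.fromRel (fun u v => ∃ h ∈ E, u ∈ h ∧ v ∈ h)

/-- A well-behaved hypergraph width measure. -/
structure WellBehaved (lam : Set (Set V) → Set V → ℚ) : Prop where
  one : ∀ (E : Set (Set V)) (x : V), 1 ≤ lam E {x}
  subadd : ∀ (E : Set (Set V)) (S T : Set V), lam E (S ∪ T) ≤ lam E S + lam E T
  add : ∀ (E : Set (Set V)) (S T : Set V), Disjoint S T →
    (∀ s ∈ S, ∀ t ∈ T, ¬ (gaif E).Adj s t) → lam E (S ∪ T) = lam E S + lam E T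
  mono : ∀ (E F : Set (Set V)) (S T : Set V), E ⊆ F → S ⊆ T → lam F S ≤ lam E T

/-- `(T, bag)` is a tree decomposition of `G`. -/
structure IsTreeDecomp {ι : Type} (G : SimpleGraph V) (T : SimpleGraph ι)
    (bag : ι → Set V) : Prop where
  conn : T.Connected
  acyclic : T.IsAcyclic
  edge_cover : ∀ ⦃u v : V⦄, G.Adj u v → ∃ t, u ∈ bag t ∧ v ∈ bag t
  vert_conn : ∀ v : V, (T.induce {t | v ∈ bag t}).Connected

/-- The `λ`-treewidth of `G` for a width measure `lam` on bags. -/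
noncomputable def lamTW (G : SimpleGraph V) (lam : Set V → ℕ) : ℕ :=
  sInf {k | ∃ (ι : Type) (T : SimpleGraph ι) (bag : ι → Set V),
    IsTreeDecomp G T bag ∧ ∀ t, lam (bag t) ≤ k}

/-- `M(G)`: attach a pendant vertex to every vertex of `G`. -/
def pend (G : SimpleGraph V) : SimpleGraph (V ⊕ V) :=
  SimpleGraph.fromRel (fun x y =>
    match x, y with
    | Sum.inl u, Sum.inl v => G.Adj u v
    | Sum.inl u, Sum.inr v => u = v
    | _, _ => False)

/-- `L²(G)`: vertices are the edges of `G`; two distinct edges are adjacent iff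
their union induces a connected subgraph. -/
def L2 (G : SimpleGraph V) : SimpleGraph G.edgeSet :=
  SimpleGraph.fromRel (fun e f =>
    ∃ x ∈ (e : Sym2 V), ∃ y ∈ (f : Sym2 V), x = y ∨ G.Adj x y)

/-- The Gaifman graph with a set `S` of vertices removed (vertices of `S` become isolated). -/
def gaifMinus (E : Set (Set V)) (S : Set V) : SimpleGraph V :=
  SimpleGraph.fromRel (fun u v => (gaif E).Adj u v ∧ u ∉ S ∧ v ∉ S)

/-- `S` is an `(A, B)`-separator: `A ∩ B ⊆ S` and every walk from `A` to `B` meets `S`. -/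
def IsSeparator (G : SimpleGraph V) (A B S : Set V) : Prop :=
  A ∩ B ⊆ S ∧ ∀ a ∈ A, ∀ b ∈ B, ∀ p : G.Walk a b, ∃ x ∈ p.support, x ∈ S

/-- Minors of clutters: obtained by repeated deletions and contractions. -/
inductive IsMinor : Set (Set V) → Set (Set V) → Prop
  | refl (E : Set (Set V)) : IsMinor E E
  | delStep {F E : Set (Set V)} (v : V) : IsMinor F E → IsMinor (del F v) E
  | contrStep {F E : Set (Set V)} (v : V) : IsMinor F E → IsMinor (contr F v) E



namespace Stmt16
open SimpleGraph

variable {ι : Type*} [DecidableEq ι] {T : SimpleGraph ι}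

/-- The set of tree nodes `i` such that every walk from `i` to `t` passes through `s`. -/
def side (T : SimpleGraph ι) (s t : ι) : Set ι := {i | ∀ p : T.Walk i t, s ∈ p.support}

lemma mem_side_of_path (hac : T.IsAcyclic) {i s t : ι} (p : T.Walk i t) (hp : p.IsPath)
    (hs : s ∈ p.support) : i ∈ side T s t := by
  intro q
  have h1 : q.bypass = p := by
    have h2 := hac.path_unique ⟨q.bypass, q.bypass_isPath⟩ ⟨p, hp⟩
    exact congrArg Subtype.val h2
  exact q.support_bypass_subset (by rw [h1]; exact hs)

lemma start_mem_side {s t : ι} : s ∈ side T s t := fun p => p.start_mem_support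

lemma end_not_mem_side {s t : ι} (hst : s ≠ t) : t ∉ side T s t := by
  intro h
  have h2 := h Walk.nil
  simp only [Walk.support_nil, List.mem_singleton] at h2
  exact hst h2

lemma side_cover (hac : T.IsAcyclic) (hconn : T.Connected) {s t : ι} (h : T.Adj s t) (i : ι) :
    i ∈ side T s t ∨ i ∈ side T t s := by
  obtain ⟨w⟩ := hconn.preconnected i t
  by_cases hs : s ∈ w.bypass.support
  · exact Or.inl (mem_side_of_path hac w.bypass w.bypass_isPath hs)
  · right
    refine mem_side_of_path hac (Walk.cons h w.bypass.reverse).reverse ?_ ?_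
    · exact (w.bypass_isPath.reverse.cons
        (by simpa [Walk.support_reverse] using hs)).reverse
    · simp only [Walk.support_reverse, Walk.support_cons, List.mem_reverse, List.mem_cons]
      exact Or.inr (by simpa [Walk.support_reverse] using w.bypass.end_mem_support)

lemma not_mem_support_of_side {s t j : ι} (hst : s ≠ t) (hj : j ∈ side T t s)
    (q : T.Walk j t) (hq : q.IsPath) : s ∉ q.support := by
  classical
  intro hs
  have ht1 : t ∈ (q.takeUntil s hs).support := hj _
  have hnd : ((q.takeUntil s hs).support ++ (q.dropUntil s hs).support.tail).Nodup := by
    rw [← Walk.support_append, q.take_spec hs]; exact hq.support_nodup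
  have ht2 : t ∈ (q.dropUntil s hs).support.tail := by
    have h3 := (q.dropUntil s hs).end_mem_support
    rw [Walk.support_eq_cons, List.mem_cons] at h3
    rcases h3 with h3 | h3
    · exact absurd h3.symm hst
    · exact h3
  exact (List.disjoint_of_nodup_append hnd) ht1 ht2

lemma crossing (hac : T.IsAcyclic) (hconn : T.Connected) {s t i j : ι} (hst : T.Adj s t)
    (hi : i ∈ side T s t) (hj : j ∈ side T t s) (w : T.Walk i j) :
    s ∈ w.support ∧ t ∈ w.support := by
  constructor
  · obtain ⟨q0⟩ := hconn.preconnected j t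
    have hsq : s ∉ q0.bypass.support :=
      not_mem_support_of_side hst.ne hj q0.bypass q0.bypass_isPath
    have h2 := hi (w.append q0.bypass)
    rw [Walk.support_append, List.mem_append] at h2
    rcases h2 with h2 | h2
    · exact h2
    · exact absurd (List.tail_subset _ h2) hsq
  · obtain ⟨q0⟩ := hconn.preconnected i s
    have htq : t ∉ q0.bypass.support :=
      not_mem_support_of_side hst.ne' hi q0.bypass q0.bypass_isPath
    have h2 := hj (w.reverse.append q0.bypass)
    rw [Walk.support_append, List.mem_append] at h2
    rcases h2 with h2 | h2
    · rwa [Walk.support_reverse, List.mem_reverse] at h2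
    · exact absurd (List.tail_subset _ h2) htq

lemma side_disjoint (hac : T.IsAcyclic) (hconn : T.Connected) {s t i : ι} (hst : T.Adj s t)
    (h1 : i ∈ side T s t) (h2 : i ∈ side T t s) : False := by
  have h3 := crossing hac hconn hst h1 h2 Walk.nil
  simp only [Walk.support_nil, List.mem_singleton] at h3
  exact hst.ne (h3.1.trans h3.2.symm)

lemma adj_mem_side (hac : T.IsAcyclic) {r s s' : ι} (hrs : T.Adj r s) (hss' : T.Adj s s')
    (hne : s' ≠ r) : s' ∈ side T s r := by
  intro q
  by_contra hs
  have hsb : s ∉ q.bypass.support := fun h => hs (q.support_bypass_subset h)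
  have hp1 : (Walk.cons hss' q.bypass).IsPath := q.bypass_isPath.cons hsb
  have hp2 : (Walk.cons hrs.symm (Walk.nil : T.Walk r r)).IsPath :=
    Walk.IsPath.nil.cons (by simp [hrs.ne'])
  have h4 := hac.path_unique ⟨_, hp1⟩ ⟨_, hp2⟩
  have h5 := congrArg (fun p : T.Path s r => (p : T.Walk s r).support) h4
  simp only [Walk.support_cons, Walk.support_nil] at h5
  have h6 : q.bypass.support = [r] := by
    injection h5 with _ h6
  have h7 := q.bypass.start_mem_support
  rw [h6, List.mem_singleton] at h7
  exact hne h7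

lemma side_subset (hac : T.IsAcyclic) {r s s' : ι} (hrs : T.Adj r s) (hss' : T.Adj s s')
    (hne : s' ≠ r) : side T s' s ⊆ side T s r := by
  classical
  intro i hi q
  suffices h : s ∈ q.bypass.support from q.support_bypass_subset h
  by_contra hs
  have hs' : s' ∈ ((Walk.cons hrs.symm q.bypass.reverse).reverse : T.Walk i s).support := hi _
  have hs'P : s' ∈ q.bypass.support := by
    simp only [Walk.support_reverse, Walk.support_cons, List.mem_reverse, List.mem_cons] at hs'
    rcases hs' with h | h
    · exact absurd h hss'.ne'
    · exact h
  have hsP2 : s ∈ (q.bypass.dropUntil s' hs'P).support :=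
    adj_mem_side hac hrs hss' hne _
  exact hs (Walk.support_dropUntil_subset _ _ hsP2)



/-- The vertices lying (only) in bags on the `s`-side of node `r`. -/
def Vside {V : Type*} (T : SimpleGraph ι) (bag : ι → Set V) (r s : ι) : Set V :=
  {u | u ∉ bag r ∧ ∃ m ∈ side T s r, u ∈ bag m}

end Stmt16

/-- balanced separators of low `λ`-width exist for hypergraphs of
`λ`-treewidth at most `k`. -/
theorem stmt_16 {V : Type} [Fintype V] (lam : Set (Set V) → Set V → ℚ)
    (hl : WellBehaved lam) (E : Set (Set V)) (k : ℚ)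
    {ι : Type} [Finite ι] (T : SimpleGraph ι) (bag : ι → Set V)
    (hD : IsTreeDecomp (gaif E) T bag) (hw : ∀ t, lam E (bag t) ≤ k)
    (W : Set V) :
    ∃ S : Set V, lam E S ≤ k ∧
      ∀ v ∉ S, lam E (W ∩ {u | (gaifMinus E S).Reachable v u}) ≤ lam E W / 2 := by
  classical
  obtain ⟨hconn, hac, hcov, hvert⟩ := hD
  set Vs : ι → ι → Set V := Stmt16.Vside T bag with hVsdef
  have lemA : ∀ s t i j : ι, ∀ v : V, T.Adj s t → i ∈ Stmt16.side T s t →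
      j ∈ Stmt16.side T t s → v ∈ bag i → v ∈ bag j → v ∈ bag s ∧ v ∈ bag t := by
    intro s t i j v hst hi hj hvi hvj
    obtain ⟨w0⟩ := (hvert v).preconnected ⟨i, hvi⟩ ⟨j, hvj⟩
    have hcross := Stmt16.crossing hac hconn hst hi hj
      (w0.map (SimpleGraph.Embedding.induce {t | v ∈ bag t}).toHom)
    have hsup : ∀ x : ι,
        x ∈ (w0.map (SimpleGraph.Embedding.induce {t | v ∈ bag t}).toHom).support →
        v ∈ bag x := by
      intro x hx
      rw [SimpleGraph.Walk.support_map] at hx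
      obtain ⟨y, hy, rfl⟩ := List.mem_map.mp hx
      exact y.2
    exact ⟨hsup s hcross.1, hsup t hcross.2⟩
  have hgm : ∀ (S : Set V) (x y : V), (gaifMinus E S).Adj x y →
      (gaif E).Adj x y ∧ x ∉ S ∧ y ∉ S := by
    intro S x y h
    rw [gaifMinus, SimpleGraph.fromRel_adj] at h
    obtain ⟨hne, h | h⟩ := h
    · exact h
    · exact ⟨h.1.symm, h.2.2, h.2.1⟩
  have lemStep : ∀ r s : ι, T.Adj r s → ∀ a c : V, (gaifMinus E (bag r)).Adj a c →
      a ∈ Vs r s → c ∈ Vs r s := by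
    intro r s hrs a c hadj ha
    obtain ⟨hg, haS, hcS⟩ := hgm _ _ _ hadj
    obtain ⟨m, ham, hcm⟩ := hcov hg
    obtain ⟨haR, mi, hmi, hami⟩ := ha
    rcases Stmt16.side_cover hac hconn hrs.symm m with hm | hm
    · exact ⟨hcS, m, hm, hcm⟩
    · exact absurd (lemA s r mi m a hrs.symm hmi hm hami ham).2 haS
  have lemB : ∀ r s : ι, T.Adj r s → ∀ v u : V, v ∈ Vs r s →
      (gaifMinus E (bag r)).Reachable v u → u ∈ Vs r s := by
    intro r s hrs v u hv hreach
    obtain ⟨w⟩ := hreach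
    revert hv
    induction w with
    | nil => exact id
    | cons h p ih => exact fun hv => ih (lemStep r s hrs _ _ h hv)
  have lemStart : ∀ r : ι, ∀ v : V, v ∉ bag r → ∃ s, T.Adj r s ∧ v ∈ Vs r s := by
    intro r v hv
    obtain ⟨⟨i, hvi⟩⟩ := (hvert v).nonempty
    have hir : i ≠ r := fun h => hv (h ▸ hvi)
    obtain ⟨q0⟩ := hconn.preconnected r i
    have hPp : q0.bypass.IsPath := q0.bypass_isPath
    have hnn : ¬ q0.bypass.Nil := SimpleGraph.Walk.not_nil_of_ne (Ne.symm hir)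
    refine ⟨q0.bypass.getVert 1, q0.bypass.adj_snd hnn, hv, i, ?_, hvi⟩
    refine Stmt16.mem_side_of_path hac q0.bypass.reverse hPp.reverse ?_
    rw [SimpleGraph.Walk.support_reverse, List.mem_reverse,
      ← SimpleGraph.Walk.cons_support_tail (p := q0.bypass) hnn]
    exact List.mem_cons_of_mem _ q0.bypass.tail.start_mem_support
  have lemD : ∀ r s : ι, T.Adj r s → lam E W / 2 < lam E (W ∩ Vs r s) →
      lam E W / 2 < lam E (W ∩ Vs s r) → False := by
    intro r s hrs h1 h2
    have hdisj : Disjoint (W ∩ Vs r s) (W ∩ Vs s r) := by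
      rw [Set.disjoint_left]
      rintro u ⟨-, hur, m, hm, hum⟩ ⟨-, hus, m', hm', hum'⟩
      exact hur (lemA s r m m' u hrs.symm hm hm' hum hum').2
    have hnoadj : ∀ x ∈ W ∩ Vs r s, ∀ y ∈ W ∩ Vs s r, ¬ (gaif E).Adj x y := by
      rintro x ⟨-, hxr, mx, hmx, hxmx⟩ y ⟨-, hys, my, hmy, hymy⟩ hadj
      obtain ⟨m'', hxm, hym⟩ := hcov hadj
      rcases Stmt16.side_cover hac hconn hrs.symm m'' with hm | hm
      · exact hys (lemA r s my m'' y hrs hmy hm hymy hym).2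
      · exact hxr (lemA s r mx m'' x hrs.symm hmx hm hxmx hxm).2
    have hadd := hl.add E _ _ hdisj hnoadj
    have hmono := hl.mono E E ((W ∩ Vs r s) ∪ (W ∩ Vs s r)) W (subset_refl E)
      (Set.union_subset Set.inter_subset_left Set.inter_subset_left)
    linarith
  have hcent : ∃ r : ι, ∀ s : ι, T.Adj r s → lam E (W ∩ Vs r s) ≤ lam E W / 2 := by
    by_contra hno
    push_neg at hno
    obtain ⟨r0⟩ := hconn.nonempty
    obtain ⟨s0, hadj0, hh0⟩ := hno r0
    have hPne : ({p | T.Adj p.1 p.2 ∧ lam E W / 2 < lam E (W ∩ Vs p.1 p.2)} :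
        Set (ι × ι)).Nonempty := ⟨(r0, s0), hadj0, hh0⟩
    obtain ⟨⟨r, r'⟩, hmem, hmax⟩ := Set.Finite.exists_maximalFor
      (fun p : ι × ι => (Stmt16.side T p.1 p.2).ncard)
      {p | T.Adj p.1 p.2 ∧ lam E W / 2 < lam E (W ∩ Vs p.1 p.2)} (Set.toFinite _) hPne
    obtain ⟨hadj, hheavy⟩ := hmem
    obtain ⟨s', hadj', hheavy'⟩ := hno r'
    by_cases hsr : s' = r
    · exact lemD r r' hadj hheavy (by rw [hsr] at hheavy'; exact hheavy')
    · have hsub : Stmt16.side T r r' ⊆ Stmt16.side T r' s' :=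
        Stmt16.side_subset hac hadj'.symm hadj.symm (fun h => hsr h.symm)
      have hlt : (Stmt16.side T r r').ncard < (Stmt16.side T r' s').ncard :=
        Set.ncard_lt_ncard ((Set.ssubset_iff_of_subset hsub).2
          ⟨r', Stmt16.start_mem_side, Stmt16.end_not_mem_side hadj.ne⟩) (Set.toFinite _)
      have heq := hmax (j := (r', s')) ⟨hadj', hheavy'⟩ (le_of_lt hlt)
      simp only at heq
      omega
  obtain ⟨r, hr⟩ := hcent
  refine ⟨bag r, hw r, ?_⟩
  intro v hv
  obtain ⟨s, hrs, hvVs⟩ := lemStart r v hv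
  have hsub : W ∩ {u | (gaifMinus E (bag r)).Reachable v u} ⊆ W ∩ Vs r s := by
    rintro u ⟨h1, h2⟩
    exact ⟨h1, lemB r s hrs v u hvVs h2⟩
  exact le_trans (hl.mono E E _ _ (subset_refl E) hsub) (hr s hrs)
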